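/- Let k : (0,∞) → ℝ be C¹ with k > 0, k' < 0, k'' > 0 and ∫_z^∞ k(y)² dy < ∞ for all z > 0, with k(z) → 0 as z → ∞. Define N(z) = (1/2) k(z)³ + 2 k'(z) ∫_z^∞ k(y)² dy − k(z) ∫_z^∞ k(y)² dy. Then N(z) < 0 for all z in the domain. -/

import Mathlib

open Real Set Filter MeasureTheory
open scoped Topology

/-- Smith's medium condition quantity `N(z) = ½k³ + 2k'∫_z^∞ k² − k∫_z^∞ k²` is negative. -/
theorem stmt_5 (k k' k'' : ℝ → ℝ)
    (hk_deriv : ∀ z > 0, HasDerivAt k (k' z) z)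
    (hk'_deriv : ∀ z > 0, HasDerivAt k' (k'' z) z)
    (hk_pos : ∀ z > 0, 0 < k z)
    (hk'_neg : ∀ z > 0, k' z < 0)
    (hk''_pos : ∀ z > 0, 0 < k'' z)
    (hint : ∀ z > 0, IntegrableOn (fun y => (k y) ^ 2) (Set.Ioi z))
    (hk_lim : Tendsto k atTop (𝓝 0)) :
    ∀ z > 0,
      (1/2) * (k z) ^ 3 + 2 * k' z * (∫ y in Set.Ioi z, (k y) ^ 2)
        - k z * (∫ y in Set.Ioi z, (k y) ^ 2) < 0 := by
  intro z hz
  set a := k z with ha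
  set c := k' z with hc
  have haz : 0 < a := hk_pos z hz
  have hcz : c < 0 := hk'_neg z hz
  have hcne : c ≠ 0 := ne_of_lt hcz
  -- k' is strictly monotone on Ici z
  have hk'mono : StrictMonoOn k' (Set.Ici z) := by
    apply strictMonoOn_of_deriv_pos (convex_Ici z)
    · intro x hx
      exact ((hk'_deriv x (lt_of_lt_of_le hz hx)).continuousAt).continuousWithinAt
    · intro x hx
      rw [interior_Ici] at hx
      rw [(hk'_deriv x (hz.trans hx)).deriv]
      exact hk''_pos x (hz.trans hx)
  -- tangent line bound: k y ≥ a + c*(y - z) for y ≥ z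
  have tangent : ∀ y, z ≤ y → a + c * (y - z) ≤ k y := by
    intro y hy
    have hmono : MonotoneOn (fun t => k t - c * t) (Set.Ici z) := by
      apply monotoneOn_of_deriv_nonneg (convex_Ici z)
      · intro x hx
        exact ((hk_deriv x (lt_of_lt_of_le hz hx)).sub
          ((hasDerivAt_id x).const_mul c)).continuousAt.continuousWithinAt
      · rw [interior_Ici]
        intro x hx
        exact ((hk_deriv x (hz.trans hx)).sub
          ((hasDerivAt_id x).const_mul c)).differentiableAt.differentiableWithinAt
      · rw [interior_Ici]
        intro x hx
        have hd : HasDerivAt (fun t => k t - c * t) (k' x - c * 1) x :=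
          (hk_deriv x (hz.trans hx)).sub ((hasDerivAt_id x).const_mul c)
        rw [hd.deriv]
        have := hk'mono (Set.self_mem_Ici) (Set.mem_Ici.2 hx.le) hx
        simp only [hc]
        linarith
    have := hmono (Set.self_mem_Ici) (Set.mem_Ici.2 hy) hy
    simp only at this
    linarith [this]
  set L := a / (-c) with hL
  have hLpos : 0 < L := div_pos haz (by linarith)
  -- tangent nonneg on [z, z+L]
  have tnonneg : ∀ y ∈ Set.Ioc z (z + L), 0 ≤ a + c * (y - z) := by
    intro y hy
    have h1 : y - z ≤ L := by linarith [hy.2]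
    have : c * (y - z) ≥ c * L := by
      apply mul_le_mul_of_nonpos_left h1 (le_of_lt hcz)
    have hcl : c * L = -a := by
      rw [hL]
      field_simp [hcne]
    linarith
  -- integral of tangent² over [z, z+L]
  have hcalc : ∫ y in z..(z + L), (a + c * (y - z)) ^ 2 = a ^ 3 / (-3 * c) := by
    have hF : ∀ y ∈ Set.uIcc z (z + L), HasDerivAt
        (fun t => (a + c * (t - z)) ^ 3 / (3 * c)) ((a + c * (y - z)) ^ 2) y := by
      intro y _
      have h1 : HasDerivAt (fun t => a + c * (t - z)) c y := by
        simpa using (((hasDerivAt_id y).sub_const z).const_mul c).const_add a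
      have h2 := (h1.pow 3).div_const (3 * c)
      convert h2 using 1
      · rfl
      · rfl
      · rfl
      rw [eq_div_iff (mul_ne_zero three_ne_zero hcne)]
      push_cast
      ring
    have hcont : IntervalIntegrable (fun y => (a + c * (y - z)) ^ 2) volume z (z + L) :=
      (Continuous.intervalIntegrable (by continuity) _ _)
    rw [intervalIntegral.integral_eq_sub_of_hasDerivAt hF hcont]
    have : a + c * (z + L - z) = 0 := by
      rw [hL]
      field_simp [hcne]
      ring
    rw [show z + L - z = L by ring] at this ⊢
    rw [this]
    field_simp
    ring
  -- integrability facts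
  have hIntK : IntegrableOn (fun y => (k y) ^ 2) (Set.Ioc z (z + L)) :=
    (hint z hz).mono_set Set.Ioc_subset_Ioi_self
  have hIntT : IntegrableOn (fun y => (a + c * (y - z)) ^ 2) (Set.Ioc z (z + L)) :=
    (Continuous.integrableOn_Ioc (by continuity))
  -- step 1: tangent² ≤ k² on Ioc z (z+L)
  have step1 : ∫ y in Set.Ioc z (z + L), (a + c * (y - z)) ^ 2
      ≤ ∫ y in Set.Ioc z (z + L), (k y) ^ 2 := by
    apply setIntegral_mono_on hIntT hIntK measurableSet_Ioc
    intro y hy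
    have h0 := tnonneg y hy
    have h1 := tangent y hy.1.le
    exact pow_le_pow_left₀ h0 h1 2
  -- step 2: Ioc integral ≤ Ioi integral
  have step2 : ∫ y in Set.Ioc z (z + L), (k y) ^ 2 ≤ ∫ y in Set.Ioi z, (k y) ^ 2 := by
    apply setIntegral_mono_set (hint z hz)
    · exact ae_of_all _ (fun y => sq_nonneg _)
    · exact HasSubset.Subset.eventuallyLE Set.Ioc_subset_Ioi_self
  have hIocEq : ∫ y in Set.Ioc z (z + L), (a + c * (y - z)) ^ 2
      = ∫ y in z..(z + L), (a + c * (y - z)) ^ 2 := by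
    rw [intervalIntegral.integral_of_le (by linarith)]
  set I := ∫ y in Set.Ioi z, (k y) ^ 2 with hI
  have key : a ^ 3 / (-3 * c) ≤ I := by
    rw [← hcalc, ← hIocEq]
    exact le_trans step1 step2
  have hIpos : 0 < I := lt_of_lt_of_le (div_pos (by positivity) (by linarith)) key
  have key2 : a ^ 3 ≤ (-3 * c) * I := by
    rw [div_le_iff₀ (by linarith)] at key
    linarith [key]
  nlinarith [mul_pos hIpos haz, mul_pos hIpos (neg_pos.2 hcz)]
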